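/- Let γ = 2(r-1)²/(r((r-1)²+1)) for some r > 1, and set q = r/(r-1) (so 1/q + 1/r = 1) and κ = 2/q. Then the equality -γ(r-1) - γ/(r-1) + 2(r-1)/r = 0 holds. Consequently, for every γ' < γ there exist q > 1 with γ' q < 2, κ > 0, r > 1 and δ > 0 such that -γ'(r-1) - γ'(q-1) - 2δ + κ > 0, 1/q + 1/r < 1 and κq/2 < 1. -/

import Mathlib

/-- Let `γ = 2(r-1)²/(r((r-1)²+1))` for some `r > 1`, and set `q = r/(r-1)` and
`κ = 2/q`. Then `-γ(r-1) - γ/(r-1) + 2(r-1)/r = 0`. Consequently, for every `γ' < γ`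
there exist `q > 1` with `γ'q < 2`, `κ > 0`, `r > 1` and `δ > 0` such that
`-γ'(r-1) - γ'(q-1) - 2δ + κ > 0`, `1/q + 1/r < 1` and `κq/2 < 1`. -/
theorem stmt_7 (r : ℝ) (hr : 1 < r) :
    (-(2 * (r - 1) ^ 2 / (r * ((r - 1) ^ 2 + 1))) * (r - 1)
      - (2 * (r - 1) ^ 2 / (r * ((r - 1) ^ 2 + 1))) / (r - 1)
      + 2 * (r - 1) / r = 0) ∧
    ∀ γ' : ℝ, γ' < 2 * (r - 1) ^ 2 / (r * ((r - 1) ^ 2 + 1)) →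
      ∃ q κ r' δ : ℝ, 1 < q ∧ γ' * q < 2 ∧ 0 < κ ∧ 1 < r' ∧ 0 < δ ∧
        -γ' * (r' - 1) - γ' * (q - 1) - 2 * δ + κ > 0 ∧
        1 / q + 1 / r' < 1 ∧ κ * q / 2 < 1 := by
  have hr0 : (0:ℝ) < r := lt_trans one_pos hr
  have hr1 : (0:ℝ) < r - 1 := sub_pos.mpr hr
  have hden : (0:ℝ) < r * ((r - 1) ^ 2 + 1) := by positivity
  set γ : ℝ := 2 * (r - 1) ^ 2 / (r * ((r - 1) ^ 2 + 1)) with hγdef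
  have hne : r * ((r - 1) ^ 2 + 1) ≠ 0 := hden.ne'
  constructor
  · rw [hγdef]
    field_simp
    ring
  · intro γ' hγ'
    set q : ℝ := r / (r - 1) with hqdef
    have hq1 : 1 < q := (one_lt_div hr1).mpr (by linarith)
    have hq0 : 0 < q := lt_trans one_pos hq1
    have hqm1 : q - 1 = 1 / (r - 1) := by
      rw [hqdef]
      field_simp
      ring
    set κ0 : ℝ := 2 * (r - 1) / r with hκ0def
    have hκ0pos : 0 < κ0 := by positivity
    have hκ0q : κ0 * q = 2 := by
      rw [hκ0def, hqdef]
      field_simp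
    -- E > 0
    have hbase : -γ * (r - 1) - γ * (q - 1) + κ0 = 0 := by
      rw [hqm1, hγdef, hκ0def]
      field_simp
      ring
    set E : ℝ := -γ' * (r - 1) - γ' * (q - 1) + κ0 with hEdef
    have hE : 0 < E := by
      have h1 : E = (γ - γ') * ((r - 1) + (q - 1)) := by
        rw [hEdef]
        nlinarith [hbase]
      rw [h1]
      have : 0 < (r - 1) + (q - 1) := by linarith
      exact mul_pos (by linarith) this
    set m : ℝ := min E κ0 with hmdef
    have hm : 0 < m := lt_min hE hκ0pos
    have hmE : m ≤ E := min_le_left _ _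
    have hmκ : m ≤ κ0 := min_le_right _ _
    have habs : (0:ℝ) < |γ'| + 1 := by positivity
    refine ⟨q, κ0 - m / 4, r + m / (16 * (|γ'| + 1)), m / 16, hq1, ?_, ?_, ?_, ?_, ?_, ?_, ?_⟩
    · -- γ' * q < 2
      have hγq : γ * q = 2 * (r - 1) / ((r - 1) ^ 2 + 1) := by
        rw [hγdef, hqdef]
        field_simp
      have h2 : γ * q < 2 := by
        rw [hγq]
        rw [div_lt_iff₀ (by positivity)]
        nlinarith [sq_nonneg (r - 2)]
      calc γ' * q < γ * q := by exact mul_lt_mul_of_pos_right hγ' hq0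
        _ < 2 := h2
    · linarith
    · have : 0 < m / (16 * (|γ'| + 1)) := by positivity
      linarith
    · positivity
    · -- main inequality
      have hγ'abs : γ' ≤ |γ'| := le_abs_self γ'
      have hbound : γ' * (m / (16 * (|γ'| + 1))) ≤ m / 16 := by
        have h1 : γ' * (m / (16 * (|γ'| + 1))) ≤ |γ'| * (m / (16 * (|γ'| + 1))) := by
          apply mul_le_mul_of_nonneg_right hγ'abs (by positivity)
        have h2 : |γ'| * (m / (16 * (|γ'| + 1))) ≤ (|γ'| + 1) * (m / (16 * (|γ'| + 1))) := by
          apply mul_le_mul_of_nonneg_right (by linarith) (by positivity)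
        have h3 : (|γ'| + 1) * (m / (16 * (|γ'| + 1))) = m / 16 := by
          field_simp
        linarith
      have key : -γ' * (r + m / (16 * (|γ'| + 1)) - 1) - γ' * (q - 1) - 2 * (m / 16)
          + (κ0 - m / 4) = E - γ' * (m / (16 * (|γ'| + 1))) - m / 8 - m / 4 := by
        rw [hEdef]; ring
      rw [key]
      nlinarith
    · -- 1/q + 1/r' < 1
      have h1 : 1 / q = (r - 1) / r := by
        rw [hqdef]; field_simp
      have hr' : r < r + m / (16 * (|γ'| + 1)) := by
        have : 0 < m / (16 * (|γ'| + 1)) := by positivity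
        linarith
      have h2 : 1 / (r + m / (16 * (|γ'| + 1))) < 1 / r :=
        one_div_lt_one_div_of_lt hr0 hr'
      have h3 : (r - 1) / r + 1 / r = 1 := by field_simp; ring
      linarith
    · -- κ q / 2 < 1
      have : (κ0 - m / 4) * q = 2 - m / 4 * q := by
        rw [sub_mul, hκ0q]
      rw [this]
      nlinarith
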